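/- If a finite state machine M is parametrically Ω-diagnosable with parameters τ, δ, T, γ₁, γ₂, then M is parametrically Ω-diagnosable with any parameters τ', δ', T', γ₁', γ₂' satisfying τ' ≥ τ, δ' ≥ δ, T' ≤ T, γ₁' ≥ γ₁, γ₂' ≥ γ₂, and γ₂' ≤ δ'. -/

import Mathlib

open Set

/-- A finite state machine: initial states, output function, transition relation. -/
structure FSM (X Y : Type*) where
  X0 : Set X
  H : X → Y
  Tr : X → X → Prop

namespace FSM

variable {X Y : Type*}

/-- Liveness: every state has a successor. -/
def Live (M : FSM X Y) : Prop := ∀ i, ∃ j, M.Tr i j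

/-- Infinite state execution starting from an initial state (0-based indexing:
index `k` corresponds to the paper's step `k+1`). -/
def IsExec (M : FSM X Y) (x : ℕ → X) : Prop :=
  x 0 ∈ M.X0 ∧ ∀ k, M.Tr (x k) (x (k + 1))

/-- Finite state execution of length `n` (positions `0, …, n-1`). -/
def IsFinExec (M : FSM X Y) (x : ℕ → X) (n : ℕ) : Prop :=
  ∀ k, k + 1 < n → M.Tr (x k) (x (k + 1))

/-- `kx` is the first step at which `x` is in `Ω`. -/
def FirstCross (Ω : Set X) (x : ℕ → X) (kx : ℕ) : Prop :=
  x kx ∈ Ω ∧ ∀ h < kx, x h ∉ Ω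

/-- The outputs of `x'` agree with those of `x` on all indices `≤ n`
(i.e. on the prefix of length `n+1`, the paper's prefix of 1-based length `n+1`). -/
def AgreeUpTo (M : FSM X Y) (x x' : ℕ → X) (n : ℕ) : Prop :=
  ∀ m ≤ n, M.H (x' m) = M.H (x m)

/-- Parametric Ω-diagnosability with parameters τ, δ, T, γ₁, γ₂ (0-based translation
of Definition 2.1: the paper's step `k ∈ [max{k_x, τ+1}, k_x+T]` is index
`k ∈ [max{k_x, τ}, k_x+T]`, the prefix of length `k+δ` (1-based) is indices `≤ k+δ`,
and the window `[max{1,k-γ₁}, k+γ₂]` is `[k ∸ γ₁, k+γ₂]`). -/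
def ParamDiag (M : FSM X Y) (Ω : Set X) (τ δ : ℕ) (T : ℕ∞) (γ₁ γ₂ : ℕ) : Prop :=
  γ₂ ≤ δ ∧
  ∀ x, M.IsExec x → ∀ kx, FirstCross Ω x kx →
    ∀ k, x k ∈ Ω → max kx τ ≤ k → (k : ℕ∞) ≤ (kx : ℕ∞) + T →
      ∀ x', M.IsExec x' → M.AgreeUpTo x x' (k + δ) →
        ∃ h, k - γ₁ ≤ h ∧ h ≤ k + γ₂ ∧ x' h ∈ Ω

/-- Ω-diagnosability with delay `δ` and uncertainties `γ₁`, `γ₂` (Definition 2.3). -/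
def OmegaDiagWith (M : FSM X Y) (Ω : Set X) (δ γ₁ γ₂ : ℕ) : Prop :=
  γ₂ ≤ δ ∧
  ∀ x, M.IsExec x → ∀ kx, FirstCross Ω x kx →
    ∀ x', M.IsExec x' → M.AgreeUpTo x x' (kx + δ) →
      ∃ h, kx - γ₁ ≤ h ∧ h ≤ kx + γ₂ ∧ x' h ∈ Ω

/-- Ω-diagnosability. -/
def OmegaDiag (M : FSM X Y) (Ω : Set X) : Prop :=
  ∃ δ γ₁ γ₂, M.OmegaDiagWith Ω δ γ₁ γ₂

/-- Eventual Ω-diagnosability with parameters τ, δ, γ₁, γ₂ (Definition 2.4). -/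
def EventDiagWith (M : FSM X Y) (Ω : Set X) (τ δ γ₁ γ₂ : ℕ) : Prop :=
  γ₂ ≤ δ ∧
  ∀ x, M.IsExec x → ∀ kx, FirstCross Ω x kx →
    ∀ k, x k ∈ Ω → max kx τ ≤ k →
      ∀ x', M.IsExec x' → M.AgreeUpTo x x' (k + δ) →
        ∃ h, k - γ₁ ≤ h ∧ h ≤ k + γ₂ ∧ x' h ∈ Ω

/-- Eventual Ω-diagnosability. -/
def EventDiag (M : FSM X Y) (Ω : Set X) : Prop :=
  ∃ τ δ γ₁ γ₂, M.EventDiagWith Ω τ δ γ₁ γ₂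

/-- Critical Ω-diagnosability: the eventual property with τ = 0 (Definition 2.5). -/
def CritDiag (M : FSM X Y) (Ω : Set X) : Prop :=
  ∃ δ γ₁ γ₂, M.EventDiagWith Ω 0 δ γ₁ γ₂

/-- Critical Ω-observability: any crossing event is detected with no delay,
no transient and no uncertainty. -/
def CritObs (M : FSM X Y) (Ω : Set X) : Prop :=
  ∀ x, M.IsExec x → ∀ k, x k ∈ Ω →
    ∀ x', M.IsExec x' → M.AgreeUpTo x x' k → x' k ∈ Ω

/-- Ω-initial state observability: Ω-diagnosability with γ₁ = γ₂ = 0. -/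
def InitStateObs (M : FSM X Y) (Ω : Set X) : Prop :=
  ∃ δ : ℕ, ∀ x, M.IsExec x → ∀ kx, FirstCross Ω x kx →
    ∀ x', M.IsExec x' → M.AgreeUpTo x x' (kx + δ) → x' kx ∈ Ω

/-- Π : the pairs of states with equal output. -/
def Pairs (M : FSM X Y) : Set (X × X) := {p | M.H p.1 = M.H p.2}

/-- The two length-`n` executions are indistinguishable (equal output strings). -/
def Indist (M : FSM X Y) (x₁ x₂ : ℕ → X) (n : ℕ) : Prop :=
  ∀ h < n, M.H (x₁ h) = M.H (x₂ h)

/-- S* : pairs of states reachable from X₀ by two indistinguishable executions. -/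
def Sstar (M : FSM X Y) : Set (X × X) :=
  {p | ∃ n ≥ 1, ∃ x₁ x₂, M.IsFinExec x₁ n ∧ M.IsFinExec x₂ n ∧
    x₁ 0 ∈ M.X0 ∧ x₂ 0 ∈ M.X0 ∧ x₁ (n - 1) = p.1 ∧ x₂ (n - 1) = p.2 ∧ M.Indist x₁ x₂ n}

/-- F_k : the k-forward indistinguishable pairs (k ≥ 1). -/
def Fset (M : FSM X Y) (k : ℕ) : Set (X × X) :=
  {p | ∃ x₁ x₂, M.IsFinExec x₁ k ∧ M.IsFinExec x₂ k ∧
    x₁ 0 = p.1 ∧ x₂ 0 = p.2 ∧ M.Indist x₁ x₂ k}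

/-- F* : pairs that are k-forward indistinguishable for every k ≥ 1. -/
def Fstar (M : FSM X Y) : Set (X × X) := ⋂ k ≥ 1, M.Fset k

/-- B_k(Σ) : the k-backward indistinguishable pairs in Σ (k ≥ 1). -/
def Bset (M : FSM X Y) (Sig : Set (X × X)) (k : ℕ) : Set (X × X) :=
  {p | ∃ x₁ x₂, M.IsFinExec x₁ k ∧ M.IsFinExec x₂ k ∧
    x₁ (k - 1) = p.1 ∧ x₂ (k - 1) = p.2 ∧
    (∀ h < k, (x₁ h, x₂ h) ∈ Sig) ∧ M.Indist x₁ x₂ k}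

/-- B*(Σ) : pairs of Σ that are k-backward indistinguishable in Σ for every k ≥ 1. -/
def Bstar (M : FSM X Y) (Sig : Set (X × X)) : Set (X × X) := ⋂ k ≥ 1, M.Bset Sig k

/-- Λ_k : pairs (i,j) ∈ S* with exactly one state in Ω, admitting indistinguishable
length-k executions from i and j such that the one starting at the non-Ω state
stays out of Ω. -/
def Lset (M : FSM X Y) (Ω : Set X) (k : ℕ) : Set (X × X) :=
  {p | p ∈ M.Sstar ∧ ∃ x₁ x₂, M.IsFinExec x₁ k ∧ M.IsFinExec x₂ k ∧
    x₁ 0 = p.1 ∧ x₂ 0 = p.2 ∧ M.Indist x₁ x₂ k ∧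
    ((p.1 ∈ Ω ∧ p.2 ∉ Ω ∧ ∀ h < k, x₂ h ∉ Ω) ∨
     (p.2 ∈ Ω ∧ p.1 ∉ Ω ∧ ∀ h < k, x₁ h ∉ Ω))}

/-- Λ* : pairs belonging to Λ_k for arbitrarily large k. -/
def Lstar (M : FSM X Y) (Ω : Set X) : Set (X × X) :=
  {p | p ∈ M.Sstar ∧ ∀ K : ℕ, ∃ k ≥ K, p ∈ M.Lset Ω k}

/-- Γ_k : pairs (i,j) ∈ S* with exactly one state in Ω, which are the final states
of indistinguishable length-k executions whose position-pairs all lie in S* and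
such that the one ending at the non-Ω state stays out of Ω. -/
def Gset (M : FSM X Y) (Ω : Set X) (k : ℕ) : Set (X × X) :=
  {p | p ∈ M.Sstar ∧ ∃ x₁ x₂, M.IsFinExec x₁ k ∧ M.IsFinExec x₂ k ∧
    x₁ (k - 1) = p.1 ∧ x₂ (k - 1) = p.2 ∧ M.Indist x₁ x₂ k ∧
    (∀ h < k, (x₁ h, x₂ h) ∈ M.Sstar) ∧
    ((p.1 ∈ Ω ∧ p.2 ∉ Ω ∧ ∀ h < k, x₂ h ∉ Ω) ∨
     (p.2 ∈ Ω ∧ p.1 ∉ Ω ∧ ∀ h < k, x₁ h ∉ Ω))}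

/-- Γ* : pairs belonging to Γ_k for arbitrarily large k. -/
def Gstar (M : FSM X Y) (Ω : Set X) : Set (X × X) :=
  {p | p ∈ M.Sstar ∧ ∀ K : ℕ, ∃ k ≥ K, p ∈ M.Gset Ω k}

/-- One step of the S-recursion: S ↦ {(i,j) ∈ Π : (pre(i) × pre(j)) ∩ S ≠ ∅} ∪ S. -/
def SstepOp (M : FSM X Y) (A : Set (X × X)) : Set (X × X) :=
  {p ∈ M.Pairs | ∃ q ∈ A, M.Tr q.1 p.1 ∧ M.Tr q.2 p.2} ∪ A

/-- The S-recursion; `Srec M k` is the paper's `S_{k+1}` (so `Srec M 0 = S₁`). -/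
def Srec (M : FSM X Y) : ℕ → Set (X × X)
  | 0 => (M.X0 ×ˢ M.X0) ∩ M.Pairs
  | k + 1 => M.SstepOp (M.Srec k)

/-- One step of the forward recursion: A ↦ {(i,j) ∈ A : (succ(i) × succ(j)) ∩ A ≠ ∅}. -/
def FstepOp (M : FSM X Y) (A : Set (X × X)) : Set (X × X) :=
  {p ∈ A | ∃ q ∈ A, M.Tr p.1 q.1 ∧ M.Tr p.2 q.2}

/-- The F-recursion; `Frec M k` is the paper's `F_{k+1}` (so `Frec M 0 = F₁ = Π`). -/
def Frec (M : FSM X Y) : ℕ → Set (X × X)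
  | 0 => M.Pairs
  | k + 1 => M.FstepOp (M.Frec k)

/-- One step of the backward recursion: A ↦ {(i,j) ∈ A : (pre(i) × pre(j)) ∩ A ≠ ∅}. -/
def BstepOp (M : FSM X Y) (A : Set (X × X)) : Set (X × X) :=
  {p ∈ A | ∃ q ∈ A, M.Tr q.1 p.1 ∧ M.Tr q.2 p.2}

/-- The B-recursion; `Brec M Σ k` is the paper's `B_{k+1}(Σ)` (so `Brec M Σ 0 = Σ`). -/
def Brec (M : FSM X Y) (Sig : Set (X × X)) : ℕ → Set (X × X)
  | 0 => Sig
  | k + 1 => M.BstepOp (M.Brec Sig k)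

/-- The Ψ-recursion; `Psirec M Ω k` is the paper's `Ψ_{k+1}` (so `Psirec M Ω 0 = Ψ₁`). -/
def Psirec (M : FSM X Y) (Ω : Set X) : ℕ → Set (X × X)
  | 0 => (Set.univ ×ˢ Ωᶜ) ∩ M.Sstar
  | k + 1 => M.FstepOp (M.Psirec Ω k)

/-- The FSM M̃ obtained from M by deleting all transitions out of Ω. -/
def tilde (M : FSM X Y) (Ω : Set X) : FSM X Y :=
  ⟨M.X0, M.H, fun i j => M.Tr i j ∧ i ∉ Ω⟩

/-- Symmetric closure of a set of pairs. -/
def symcl (W : Set (X × X)) : Set (X × X) := W ∪ {p | p.swap ∈ W}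

/-- Convergence index f* of the forward recursion. -/
noncomputable def fIdx (M : FSM X Y) : ℕ := sInf {f | 1 ≤ f ∧ M.Fset f = M.Fstar}

/-- Convergence index b* of the backward recursion on Σ. -/
noncomputable def bIdx (M : FSM X Y) (Sig : Set (X × X)) : ℕ :=
  sInf {b | 1 ≤ b ∧ M.Bset Sig b = M.Bstar Sig}

/-- Convergence index l* of the Λ-recursion. -/
noncomputable def lIdx (M : FSM X Y) (Ω : Set X) : ℕ :=
  sInf {l | 1 ≤ l ∧ M.Lset Ω l = M.Lstar Ω}

/-- Convergence index g* of the Γ-recursion. -/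
noncomputable def gIdx (M : FSM X Y) (Ω : Set X) : ℕ :=
  sInf {g | 1 ≤ g ∧ M.Gset Ω g = M.Gstar Ω}

end FSM

/-- Proposition 2.2, monotonicity of parametric Ω-diagnosability. -/
theorem param_diag_mono {X Y : Type*} (M : FSM X Y) (hlive : M.Live) (Ω : Set X)
    (τ δ : ℕ) (T : ℕ∞) (γ₁ γ₂ : ℕ) (τ' δ' : ℕ) (T' : ℕ∞) (γ₁' γ₂' : ℕ)
    (h : M.ParamDiag Ω τ δ T γ₁ γ₂)
    (hτ : τ ≤ τ') (hδ : δ ≤ δ') (hT : T' ≤ T)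
    (hγ₁ : γ₁ ≤ γ₁') (hγ₂ : γ₂ ≤ γ₂') (hγδ : γ₂' ≤ δ') :
    M.ParamDiag Ω τ' δ' T' γ₁' γ₂' := by
  obtain ⟨-, h⟩ := h
  refine ⟨hγδ, fun x hx kx hkx k hkΩ hmax hle x' hx' hag => ?_⟩
  obtain ⟨hh, hh1, hh2, hh3⟩ := h x hx kx hkx k hkΩ
    (le_trans (max_le_max le_rfl hτ) hmax)
    (le_trans hle (add_le_add_right hT _)) x' hx'
    (fun m hm => hag m (le_trans hm (by omega)))
  exact ⟨hh, le_trans (Nat.sub_le_sub_left hγ₁ k) hh1, le_trans hh2 (by omega), hh3⟩
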